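/- Let d, L ≥ 1, let k_1,…,k_L ∈ ℝ^d be keys with K_max = max_i ‖k_i‖, let n ≤ L, and for a query q let A(q) denote the attention weights and τ*(q) the maximum of Σ_{i∈S} A_i(q) over all size-n subsets S. Suppose Ŝ ⊆ {1,…,L} contains some size-n subset S* that attains τ*(q). Then for any other query q': Σ_{i∈Ŝ} A_i(q') ≥ τ*(q') − 2 Σ_{i=1}^L |A_i(q') − A_i(q)|. In particular, if q and q' are unit vectors with ⟨q, q'⟩ ≥ τ for some τ ≤ 1, then Σ_{i∈Ŝ} A_i(q') ≥ τ*(q') − (4 K_max/√d) √(2 − 2τ), so the pre-hoc retained-mass gap of the shared (dilated) index set Ŝ is at most 2‖A(q') − A(q)‖₁ ≤ (4 K_max/√d)√(2 − 2τ). -/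
import Mathlib


open scoped RealInnerProductSpace


/-- Attention weights `A_i(q) = exp(⟨q,k_i⟩/√d) / ∑_j exp(⟨q,k_j⟩/√d)`. -/
noncomputable def attnWeight {d L : ℕ} (k : Fin L → EuclideanSpace ℝ (Fin d))
    (q : EuclideanSpace ℝ (Fin d)) (i : Fin L) : ℝ :=
  Real.exp (⟪q, k i⟫ / Real.sqrt d) / ∑ j, Real.exp (⟪q, k j⟫ / Real.sqrt d)

/-- The oracle retained mass `τ*(q)`: the maximum of `∑_{i∈S} A_i(q)` over
all subsets `S` of cardinality `n`. -/
noncomputable def oracleMass {d L : ℕ} (hL : 1 ≤ L) (n : ℕ) (hn : n ≤ L)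
    (k : Fin L → EuclideanSpace ℝ (Fin d)) (q : EuclideanSpace ℝ (Fin d)) : ℝ :=
  (Finset.univ.powersetCard n).sup'
    (Finset.powersetCard_nonempty.mpr (by simpa using hn))
    fun S => ∑ i ∈ S, attnWeight k q i


lemma posPart_softmax_le {L : ℕ} (hL : 0 < L) (a b : Fin L → ℝ) (ε : ℝ) (hε : 0 ≤ ε)
    (h : ∀ i, |a i - b i| ≤ ε)
    (hZ : (∑ j, Real.exp (b j)) ≤ ∑ j, Real.exp (a j)) :
    ∑ i, max (Real.exp (a i) / (∑ j, Real.exp (a j))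
      - Real.exp (b i) / (∑ j, Real.exp (b j))) 0 ≤ 1 - Real.exp (-ε) := by
  set Za := ∑ j, Real.exp (a j) with hZa'
  set Zb := ∑ j, Real.exp (b j) with hZb'
  have hZb : 0 < Zb := Finset.sum_pos (fun j _ => Real.exp_pos _) ⟨⟨0, hL⟩, Finset.mem_univ _⟩
  have hZa : 0 < Za := lt_of_lt_of_le hZb hZ
  have hexp1 : Real.exp (-ε) ≤ 1 := Real.exp_le_one_iff.2 (by linarith)
  have hbound : ∀ i, max (Real.exp (a i) / Za - Real.exp (b i) / Zb) 0
      ≤ Real.exp (a i) * (1 - Real.exp (-ε)) / Za := by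
    intro i
    apply max_le
    · have h1 : Real.exp (a i - ε) ≤ Real.exp (b i) := by
        apply Real.exp_le_exp.2
        have := abs_le.1 (h i)
        linarith [this.1]
      have h2 : Real.exp (a i - ε) / Za ≤ Real.exp (b i) / Zb := by
        calc Real.exp (a i - ε) / Za ≤ Real.exp (b i) / Za := by gcongr
          _ ≤ Real.exp (b i) / Zb := by gcongr
      have h3 : Real.exp (a i) * Real.exp (-ε) = Real.exp (a i - ε) := by
        rw [← Real.exp_add]; ring_nf
      calc Real.exp (a i) / Za - Real.exp (b i) / Zb
          ≤ Real.exp (a i) / Za - Real.exp (a i - ε) / Za := by linarith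
        _ = Real.exp (a i) * (1 - Real.exp (-ε)) / Za := by rw [← h3]; ring
    · apply div_nonneg (mul_nonneg (Real.exp_pos _).le (by linarith)) hZa.le
  calc ∑ i, max (Real.exp (a i) / Za - Real.exp (b i) / Zb) 0
      ≤ ∑ i, Real.exp (a i) * (1 - Real.exp (-ε)) / Za :=
        Finset.sum_le_sum fun i _ => hbound i
    _ = Za * (1 - Real.exp (-ε)) / Za := by
        rw [← Finset.sum_div, ← Finset.sum_mul]
    _ = 1 - Real.exp (-ε) := by field_simp

lemma softmax_l1_le {L : ℕ} (hL : 0 < L) (a b : Fin L → ℝ) (ε : ℝ) (hε : 0 ≤ ε)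
    (h : ∀ i, |a i - b i| ≤ ε) :
    ∑ i, |Real.exp (a i) / (∑ j, Real.exp (a j))
      - Real.exp (b i) / (∑ j, Real.exp (b j))| ≤ 2 * ε := by
  set Za := ∑ j, Real.exp (a j) with hZa'
  set Zb := ∑ j, Real.exp (b j) with hZb'
  have hZb : 0 < Zb := Finset.sum_pos (fun j _ => Real.exp_pos _) ⟨⟨0, hL⟩, Finset.mem_univ _⟩
  have hZa : 0 < Za := Finset.sum_pos (fun j _ => Real.exp_pos _) ⟨⟨0, hL⟩, Finset.mem_univ _⟩
  set p : Fin L → ℝ := fun i => Real.exp (a i) / Za with hp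
  set q : Fin L → ℝ := fun i => Real.exp (b i) / Zb with hq
  have hsum_p : ∑ i, p i = 1 := by
    simp only [hp, ← Finset.sum_div]
    exact div_self hZa.ne'
  have hsum_q : ∑ i, q i = 1 := by
    simp only [hq, ← Finset.sum_div]
    exact div_self hZb.ne'
  have habs : ∀ i, |p i - q i| = max (p i - q i) 0 + max (q i - p i) 0 := by
    intro i
    rcases le_total (p i) (q i) with h' | h'
    · rw [abs_of_nonpos (by linarith), max_eq_right (by linarith),
        max_eq_left (by linarith)]; ring
    · rw [abs_of_nonneg (by linarith), max_eq_left (by linarith),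
        max_eq_right (by linarith)]; ring
  have hsplit : ∑ i, |p i - q i|
      = (∑ i, max (p i - q i) 0) + ∑ i, max (q i - p i) 0 := by
    rw [← Finset.sum_add_distrib]
    exact Finset.sum_congr rfl fun i _ => habs i
  have heq : (∑ i, max (p i - q i) 0) = ∑ i, max (q i - p i) 0 := by
    have : (∑ i, max (p i - q i) 0) - (∑ i, max (q i - p i) 0)
        = ∑ i, (p i - q i) := by
      rw [← Finset.sum_sub_distrib]
      apply Finset.sum_congr rfl
      intro i _
      rcases le_total (p i) (q i) with h' | h'
      · rw [max_eq_right (by linarith), max_eq_left (by linarith)]; ring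
      · rw [max_eq_left (by linarith), max_eq_right (by linarith)]; ring
    rw [Finset.sum_sub_distrib, hsum_p, hsum_q] at this
    linarith
  have hone : 1 - Real.exp (-ε) ≤ ε := by
    have := Real.add_one_le_exp (-ε)
    linarith
  rcases le_total Zb Za with hZ | hZ
  · have := posPart_softmax_le hL a b ε hε h hZ
    rw [hsplit, ← heq]
    simp only [hp, hq] at *
    linarith
  · have := posPart_softmax_le hL b a ε hε (fun i => by rw [abs_sub_comm]; exact h i) hZ
    rw [hsplit, heq]
    simp only [hp, hq] at *
    linarith

/-- if the shared (dilated) index set `Ŝ` contains a size-`n` set `S*`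
attaining the oracle mass `τ*(q)`, then for any other query `q'`,
`∑_{i∈Ŝ} A_i(q') ≥ τ*(q') − 2‖A(q')−A(q)‖₁`; in particular, for unit queries with
`⟨q,q'⟩ ≥ τ`, the pre-hoc retained-mass gap is at most `(4 K_max/√d)√(2−2τ)`. -/
theorem prehoc_retained_mass_gap (d L : ℕ) (hd : 1 ≤ d) (hL : 1 ≤ L)
    (k : Fin L → EuclideanSpace ℝ (Fin d)) (Kmax : ℝ)
    (hK : Kmax = Finset.univ.sup' (Finset.univ_nonempty_iff.mpr ⟨⟨0, hL⟩⟩)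
      fun i => ‖k i‖)
    (n : ℕ) (hn : n ≤ L)
    (q q' : EuclideanSpace ℝ (Fin d))
    (Shat : Finset (Fin L))
    (hShat : ∃ Sstar : Finset (Fin L), Sstar ⊆ Shat ∧ Sstar.card = n ∧
      ∑ i ∈ Sstar, attnWeight k q i = oracleMass hL n hn k q)
    (τ : ℝ) (hτ : τ ≤ 1) :
    (∑ i ∈ Shat, attnWeight k q' i ≥
      oracleMass hL n hn k q' - 2 * ∑ i, |attnWeight k q' i - attnWeight k q i|) ∧
    (‖q‖ = 1 → ‖q'‖ = 1 → τ ≤ ⟪q, q'⟫ →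
      (∑ i ∈ Shat, attnWeight k q' i ≥
        oracleMass hL n hn k q' - 4 * Kmax / Real.sqrt d * Real.sqrt (2 - 2 * τ)) ∧
      2 * ∑ i, |attnWeight k q' i - attnWeight k q i| ≤
        4 * Kmax / Real.sqrt d * Real.sqrt (2 - 2 * τ)) := by
  obtain ⟨Sstar, hsub, hcard, hstar⟩ := hShat
  set D := ∑ i, |attnWeight k q' i - attnWeight k q i| with hD
  have hnonneg : ∀ (u : EuclideanSpace ℝ (Fin d)) (i : Fin L), 0 ≤ attnWeight k u i := by
    intro u i
    exact div_nonneg (Real.exp_pos _).le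
      (Finset.sum_nonneg fun j _ => (Real.exp_pos _).le)
  have hTle : ∀ T : Finset (Fin L),
      |∑ i ∈ T, attnWeight k q' i - ∑ i ∈ T, attnWeight k q i| ≤ D := by
    intro T
    rw [← Finset.sum_sub_distrib]
    refine (Finset.abs_sum_le_sum_abs _ _).trans ?_
    exact Finset.sum_le_sum_of_subset_of_nonneg (Finset.subset_univ T)
      fun i _ _ => abs_nonneg _
  -- part 1
  have part1 : ∑ i ∈ Shat, attnWeight k q' i ≥ oracleMass hL n hn k q' - 2 * D := by
    obtain ⟨T, hTmem, hTeq⟩ := Finset.exists_mem_eq_sup'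
      (Finset.powersetCard_nonempty.mpr (by simpa using hn) :
        (Finset.univ.powersetCard n).Nonempty)
      (fun S => ∑ i ∈ S, attnWeight k q' i)
    have hTq : ∑ i ∈ T, attnWeight k q i ≤ oracleMass hL n hn k q := by
      rw [oracleMass]
      exact Finset.le_sup' (fun S => ∑ i ∈ S, attnWeight k q i) hTmem
    have h1 : oracleMass hL n hn k q' ≤ ∑ i ∈ T, attnWeight k q i + D := by
      rw [oracleMass, hTeq]
      have := abs_le.1 (hTle T)
      linarith [this.2]
    have h2 : ∑ i ∈ Sstar, attnWeight k q i ≤ ∑ i ∈ Sstar, attnWeight k q' i + D := by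
      have := abs_le.1 (hTle Sstar)
      linarith [this.1]
    have h3 : ∑ i ∈ Sstar, attnWeight k q' i ≤ ∑ i ∈ Shat, attnWeight k q' i :=
      Finset.sum_le_sum_of_subset_of_nonneg hsub fun i _ _ => hnonneg q' i
    linarith [hTq, h1, h2, h3, hstar]
  refine ⟨part1, fun hq1 hq1' hττ => ?_⟩
  -- part 2
  have hd0 : (0:ℝ) < Real.sqrt d := Real.sqrt_pos.2 (by exact_mod_cast hd)
  have hKi : ∀ i, ‖k i‖ ≤ Kmax := by
    intro i; rw [hK]; exact Finset.le_sup' (fun i => ‖k i‖) (Finset.mem_univ i)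
  have hK0 : 0 ≤ Kmax := le_trans (norm_nonneg _) (hKi ⟨0, hL⟩)
  have hτ0 : (0:ℝ) ≤ 2 - 2 * τ := by linarith
  have hqq : ‖q' - q‖ ≤ Real.sqrt (2 - 2 * τ) := by
    have hsq : ‖q' - q‖ ^ 2 = 2 - 2 * ⟪q, q'⟫ := by
      rw [norm_sub_sq_real, hq1, hq1', real_inner_comm]; ring
    have h1 : ‖q' - q‖ ^ 2 ≤ 2 - 2 * τ := by rw [hsq]; linarith
    calc ‖q' - q‖ = Real.sqrt (‖q' - q‖ ^ 2) := (Real.sqrt_sq (norm_nonneg _)).symm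
      _ ≤ Real.sqrt (2 - 2 * τ) := Real.sqrt_le_sqrt h1
  set ε := Kmax * Real.sqrt (2 - 2 * τ) / Real.sqrt d with hε'
  have hε : 0 ≤ ε := by positivity
  have hab : ∀ i, |⟪q', k i⟫ / Real.sqrt d - ⟪q, k i⟫ / Real.sqrt d| ≤ ε := by
    intro i
    rw [div_sub_div_same, abs_div, abs_of_pos hd0]
    rw [hε']
    gcongr
    calc |⟪q', k i⟫ - ⟪q, k i⟫| = |⟪q' - q, k i⟫| := by rw [inner_sub_left]
      _ ≤ ‖q' - q‖ * ‖k i‖ := abs_real_inner_le_norm _ _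
      _ ≤ Kmax * Real.sqrt (2 - 2 * τ) := by
          rw [mul_comm]; gcongr; exact hKi i
  have hl1 : D ≤ 2 * ε := by
    have := softmax_l1_le (by omega : 0 < L)
      (fun i => ⟪q', k i⟫ / Real.sqrt d) (fun i => ⟪q, k i⟫ / Real.sqrt d) ε hε hab
    simpa [attnWeight, hD] using this
  have hfin : 2 * D ≤ 4 * Kmax / Real.sqrt d * Real.sqrt (2 - 2 * τ) := by
    have : 4 * Kmax / Real.sqrt d * Real.sqrt (2 - 2 * τ) = 2 * (2 * ε) := by
      rw [hε']; ring
    rw [this]; linarith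
  exact ⟨by linarith [part1], hfin⟩
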